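/- If x is an element of a group G with generalized order k, then for every positive integer m, x^{k^m} belongs to γ_m(G), the m-th term of the lower central series of G. -/

import Mathlib

/-- `x` is a generalized torsion element: some nonempty finite product of
conjugates of `x` equals `1`. -/
def IsGenTorsion {G : Type*} [Group G] (x : G) : Prop :=
  ∃ l : List G, l ≠ [] ∧ (l.map fun g => g⁻¹ * x * g).prod = 1

/-- The generalized order of `x`: the least `k ≥ 1` such that some product of
`k` conjugates of `x` equals `1` (0 if no such `k` exists). -/
noncomputable def genOrder {G : Type*} [Group G] (x : G) : ℕ :=
  sInf {k | 0 < k ∧ ∃ l : List G, l.length = k ∧ (l.map fun g => g⁻¹ * x * g).prod = 1}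

section Aux

open scoped commutatorElement

variable {G : Type*} [Group G]


lemma mk_comm' {G : Type*} [Group G] {N : Subgroup G} [N.Normal] (a b : G) :
    ((⁅a, b⁆ : G) : G ⧸ N) = ⁅((a : G) : G ⧸ N), ((b : G) : G ⧸ N)⁆ := by
  simp [commutatorElement_def]

/-- Elements of "level `j`" built from `x`. -/
inductive Good (x : G) : ℕ → G → Prop
  | base : Good x 0 x
  | conj {j : ℕ} {t : G} (h : G) : Good x j t → Good x j (h * t * h⁻¹)
  | inv {j : ℕ} {t : G} : Good x j t → Good x j t⁻¹
  | comm {j : ℕ} {t : G} (g : G) : Good x j t → Good x (j + 1) ⁅t, g⁆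

/-- Subgroup generated by level-`j` elements. -/
def SS (x : G) (j : ℕ) : Subgroup G := Subgroup.closure {t | Good x j t}

instance SS_normal (x : G) (j : ℕ) : (SS x j).Normal := by
  constructor
  intro p hp h
  refine Subgroup.closure_induction (p := fun g _ => h * g * h⁻¹ ∈ SS x j)
    (fun t ht => Subgroup.subset_closure (Good.conj h ht)) ?_ ?_ ?_ hp
  · simpa using (SS x j).one_mem
  · intro a b _ _ iha ihb
    have : h * (a * b) * h⁻¹ = (h * a * h⁻¹) * (h * b * h⁻¹) := by group
    rw [this]; exact mul_mem iha ihb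
  · intro a _ iha
    have : h * a⁻¹ * h⁻¹ = (h * a * h⁻¹)⁻¹ := by group
    rw [this]; exact inv_mem iha

lemma good_central {x : G} {j : ℕ} {s : G} (hs : Good x j s) :
    ((s : G) : G ⧸ SS x (j + 1)) ∈ Subgroup.center (G ⧸ SS x (j + 1)) := by
  rw [Subgroup.mem_center_iff]
  intro q
  obtain ⟨g, rfl⟩ := QuotientGroup.mk_surjective q
  have h1 : ((⁅s, g⁆ : G) : G ⧸ SS x (j + 1)) = 1 :=
    (QuotientGroup.eq_one_iff _).2 (Subgroup.subset_closure (Good.comm g hs))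
  have h2 : ⁅((s : G) : G ⧸ SS x (j + 1)), ((g : G) : G ⧸ SS x (j + 1))⁆ = 1 := by
    rw [← mk_comm']
    exact h1
  exact (commutatorElement_eq_one_iff_mul_comm.1 h2).symm

lemma SS_central {x : G} {j : ℕ} {p : G} (hp : p ∈ SS x j) :
    ((p : G) : G ⧸ SS x (j + 1)) ∈ Subgroup.center (G ⧸ SS x (j + 1)) := by
  refine Subgroup.closure_induction
    (p := fun g _ => ((g : G) : G ⧸ SS x (j + 1)) ∈ Subgroup.center (G ⧸ SS x (j + 1)))
    (fun t ht => good_central ht) ?_ ?_ ?_ hp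
  · simpa using (Subgroup.center (G ⧸ SS x (j + 1))).one_mem
  · intro a b _ _ iha ihb
    rw [QuotientGroup.mk_mul]; exact mul_mem iha ihb
  · intro a _ iha
    rw [QuotientGroup.mk_inv]; exact inv_mem iha

lemma commutator_pow_of_central {H : Type*} [Group H] {a b : H}
    (hc : ⁅a, b⁆ ∈ Subgroup.center H) : ∀ n : ℕ, ⁅a, b⁆ ^ n = ⁅a ^ n, b⁆
  | 0 => by
      have : ⁅a ^ 0, b⁆ = 1 := by
        rw [pow_zero]; simp [commutatorElement_def]
      rw [this, pow_zero]
  | n + 1 => by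
      have expand : ⁅a ^ (n + 1), b⁆ = a * ⁅a ^ n, b⁆ * a⁻¹ * ⁅a, b⁆ := by
        simp only [commutatorElement_def, pow_succ']
        group
      rw [expand, ← commutator_pow_of_central hc n]
      have hcn : ⁅a, b⁆ ^ n ∈ Subgroup.center H := pow_mem hc n
      have h1 : a * ⁅a, b⁆ ^ n * a⁻¹ = ⁅a, b⁆ ^ n := by
        rw [Subgroup.mem_center_iff.1 hcn a]
        group
      rw [h1, ← pow_succ]

lemma good_pow_mem {x : G} {k : ℕ} {l : List G} (hl : l.length = k)
    (hp : (l.map fun g => g⁻¹ * x * g).prod = 1) :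
    ∀ {j : ℕ} {t : G}, Good x j t → t ^ k ∈ SS x (j + 1) := by
  intro j t h
  induction h with
  | base =>
      rw [← QuotientGroup.eq_one_iff]
      have key : ∀ l' : List G,
          (((l'.map fun g => g⁻¹ * x * g).prod : G) : G ⧸ SS x 1)
            = ((x : G) : G ⧸ SS x 1) ^ l'.length := by
        intro l'
        induction l' with
        | nil => simp
        | cons g l' ih =>
            have hx0 := Subgroup.mem_center_iff.1 (good_central (Good.base (x := x)))
            have hconj : (((g⁻¹ * x * g : G)) : G ⧸ SS x 1)
                = ((x : G) : G ⧸ SS x 1) := by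
              rw [QuotientGroup.mk_mul, QuotientGroup.mk_mul, QuotientGroup.mk_inv,
                mul_assoc, ← hx0]
              group
            simp only [List.map_cons, List.prod_cons, List.length_cons,
              QuotientGroup.mk_mul, hconj, ih]
            rw [pow_succ']
      have := key l
      rw [hp, hl] at this
      have hxk : (((x ^ k : G)) : G ⧸ SS x 1) = 1 := by
        rw [QuotientGroup.mk_pow]
        · exact this.symm
      exact hxk
  | conj h' ht ih =>
      rw [conj_pow]
      exact (SS_normal x _).conj_mem _ ih h'
  | inv ht ih =>
      rw [inv_pow]
      exact inv_mem ih
  | comm g ht ih =>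
      rename_i j' t'
      rw [← QuotientGroup.eq_one_iff]
      have hcast : ((( ⁅t', g⁆ ^ k : G)) : G ⧸ SS x (j' + 1 + 1))
          = ⁅((t' : G) : G ⧸ SS x (j' + 1 + 1)), ((g : G) : G ⧸ SS x (j' + 1 + 1))⁆ ^ k := by
        rw [QuotientGroup.mk_pow, mk_comm']
      rw [hcast]
      have hc : ⁅((t' : G) : G ⧸ SS x (j' + 1 + 1)), ((g : G) : G ⧸ SS x (j' + 1 + 1))⁆
          ∈ Subgroup.center (G ⧸ SS x (j' + 1 + 1)) := by
        have := good_central (Good.comm g ht)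
        rwa [mk_comm'] at this
      rw [commutator_pow_of_central hc k]
      have htk : (((t' ^ k : G)) : G ⧸ SS x (j' + 1 + 1))
          ∈ Subgroup.center (G ⧸ SS x (j' + 1 + 1)) := SS_central ih
      rw [QuotientGroup.mk_pow] at htk
      rw [commutatorElement_eq_one_iff_mul_comm]
      exact (Subgroup.mem_center_iff.1 htk _).symm

lemma SS_pow_mem {x : G} {k : ℕ} {l : List G} (hl : l.length = k)
    (hp : (l.map fun g => g⁻¹ * x * g).prod = 1)
    {j : ℕ} {p : G} (hmem : p ∈ SS x j) : p ^ k ∈ SS x (j + 1) := by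
  rw [← QuotientGroup.eq_one_iff, QuotientGroup.mk_pow]
  refine Subgroup.closure_induction
    (p := fun g _ => ((g : G) : G ⧸ SS x (j + 1)) ^ k = 1)
    (fun t ht => ?_) ?_ ?_ ?_ hmem
  · show ((t : G) : G ⧸ SS x (j + 1)) ^ k = 1
    rw [← QuotientGroup.mk_pow]
    exact (QuotientGroup.eq_one_iff _).2 (good_pow_mem hl hp ht)
  · simp
  · intro a b ha hb iha ihb
    show ((a * b : G) : G ⧸ SS x (j + 1)) ^ k = 1
    replace iha : ((a : G) : G ⧸ SS x (j + 1)) ^ k = 1 := iha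
    replace ihb : ((b : G) : G ⧸ SS x (j + 1)) ^ k = 1 := ihb
    have hca := Subgroup.mem_center_iff.1 (SS_central ha)
    have hcomm : Commute ((a : G) : G ⧸ SS x (j + 1)) ((b : G) : G ⧸ SS x (j + 1)) :=
      (hca b).symm
    rw [QuotientGroup.mk_mul, hcomm.mul_pow, iha, ihb, one_mul]
  · intro a _ iha
    show ((a⁻¹ : G) : G ⧸ SS x (j + 1)) ^ k = 1
    replace iha : ((a : G) : G ⧸ SS x (j + 1)) ^ k = 1 := iha
    rw [QuotientGroup.mk_inv, inv_pow, iha, inv_one]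

lemma x_pow_pow_mem {x : G} {k : ℕ} {l : List G} (hl : l.length = k)
    (hp : (l.map fun g => g⁻¹ * x * g).prod = 1) :
    ∀ m : ℕ, x ^ k ^ m ∈ SS x m
  | 0 => by
      simpa [SS] using (Subgroup.subset_closure (Good.base (x := x)) : x ∈ SS x 0)
  | m + 1 => by
      rw [pow_succ, pow_mul]
      exact SS_pow_mem hl hp (x_pow_pow_mem hl hp m)

lemma good_mem_lcs {x : G} : ∀ {j : ℕ} {t : G}, Good x j t → t ∈ (⊤ : Subgroup G).lowerCentralSeries j := by
  intro j t h
  induction h with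
  | base => rw [Subgroup.lowerCentralSeries_zero]; exact Subgroup.mem_top x
  | conj h' ht ih => exact Subgroup.Normal.conj_mem inferInstance _ ih h'
  | inv ht ih => exact inv_mem ih
  | comm g ht ih =>
      rw [Subgroup.lowerCentralSeries_succ]
      exact Subgroup.commutator_mem_commutator ih (Subgroup.mem_top g)

lemma SS_le_lcs (x : G) (j : ℕ) : SS x j ≤ (⊤ : Subgroup G).lowerCentralSeries j :=
  (Subgroup.closure_le _).2 fun _ ht => good_mem_lcs ht

end Aux

theorem stmt16 {G : Type*} [Group G] (x : G) (k : ℕ) (hx : IsGenTorsion x)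
    (hk : genOrder x = k) (m : ℕ) (hm : 0 < m) :
    x ^ (k ^ m) ∈ (⊤ : Subgroup G).lowerCentralSeries (m - 1) := by
  obtain ⟨l0, hl0ne, hl0⟩ := hx
  have hne : {k | 0 < k ∧ ∃ l : List G, l.length = k ∧
      (l.map fun g => g⁻¹ * x * g).prod = 1}.Nonempty :=
    ⟨l0.length, List.length_pos_iff.2 hl0ne, l0, rfl, hl0⟩
  have hmem := Nat.sInf_mem hne
  rw [show sInf {k | 0 < k ∧ ∃ l : List G, l.length = k ∧
      (l.map fun g => g⁻¹ * x * g).prod = 1} = genOrder x from rfl, hk] at hmem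
  obtain ⟨hk0, l, hl, hp⟩ := hmem
  obtain ⟨n, rfl⟩ : ∃ n, m = n + 1 := ⟨m - 1, (Nat.succ_pred_eq_of_pos hm).symm⟩
  simp only [Nat.add_sub_cancel]
  rw [pow_succ, pow_mul]
  exact pow_mem (SS_le_lcs x n (x_pow_pow_mem hl hp n)) k
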